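/- Let q̄ ∈ (0,1), let 0 < δ ≤ min(q̄, 1−q̄), set c₀ := min( 1/( ρ + (1/16)·((h−l)/(σδ))² ), 1 ), and define v(q) := c₀·( 1 − (q−q̄)²/δ² ). Then for every q ∈ [q̄−δ, q̄+δ] one has ρ·v(q) − (1/2)·((h−l)/σ)²·q²·(1−q)²·v''(q) ≤ 1 and 0 ≤ v(q) ≤ c₀ ≤ 1; moreover v(q̄−δ) = v(q̄+δ) = 0 and v(q̄) = c₀ > 0. -/

import Mathlib

set_option autoImplicit false

set_option maxHeartbeats 1600000 in
theorem stmt_14 (l μ h ρ σ : ℝ)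
    (hl : 0 < l) (hlμ : l < μ) (hμh : μ < h) (hρ : 0 < ρ) (hσ : 0 < σ)
    (qbar δ : ℝ) (hqbar : qbar ∈ Set.Ioo (0 : ℝ) 1)
    (hδ : 0 < δ) (hδle : δ ≤ min qbar (1 - qbar))
    (c₀ : ℝ)
    (hc₀ : c₀ = min (1 / (ρ + (1 / 16) * ((h - l) / (σ * δ)) ^ 2)) 1)
    (v : ℝ → ℝ)
    (hv : ∀ q : ℝ, v q = c₀ * (1 - (q - qbar) ^ 2 / δ ^ 2)) :
    (∀ q ∈ Set.Icc (qbar - δ) (qbar + δ),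
      ρ * v q - (1 / 2) * ((h - l) / σ) ^ 2 * q ^ 2 * (1 - q) ^ 2 * deriv (deriv v) q ≤ 1
      ∧ 0 ≤ v q ∧ v q ≤ c₀ ∧ c₀ ≤ 1)
    ∧ v (qbar - δ) = 0 ∧ v (qbar + δ) = 0 ∧ v qbar = c₀ ∧ 0 < c₀ := by
  have hδ2 : (0:ℝ) < δ ^ 2 := by positivity
  have hKnn : 0 ≤ ((h - l) / σ) ^ 2 := sq_nonneg _
  have hP : 0 < ρ + (1 / 16) * ((h - l) / (σ * δ)) ^ 2 := by positivity
  have hc₀pos : 0 < c₀ := by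
    rw [hc₀]; exact lt_min (by positivity) one_pos
  have hc₀le1 : c₀ ≤ 1 := hc₀ ▸ min_le_right _ _
  have h2 : ((h - l) / (σ * δ)) ^ 2 = ((h - l) / σ) ^ 2 / δ ^ 2 := by
    rw [div_pow, div_pow, mul_pow, div_div]
  have hcP : c₀ * (ρ + (1 / 16) * (((h - l) / σ) ^ 2 / δ ^ 2)) ≤ 1 := by
    have h1 : c₀ ≤ 1 / (ρ + (1 / 16) * ((h - l) / (σ * δ)) ^ 2) := hc₀ ▸ min_le_left _ _
    rw [h2] at h1 hP
    exact (le_div_iff₀ hP).mp h1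
  -- second derivative
  have hvf : v = fun q => c₀ * (1 - (q - qbar) ^ 2 / δ ^ 2) := funext hv
  have H1 : ∀ x : ℝ, HasDerivAt v (-(2 * c₀ / δ ^ 2) * (x - qbar)) x := by
    intro x
    have h1 : HasDerivAt (fun q : ℝ => q - qbar) 1 x := (hasDerivAt_id x).sub_const qbar
    have h4 := (((h1.pow 2).div_const (δ ^ 2)).const_sub 1).const_mul c₀
    rw [hvf]
    exact h4.congr_deriv (by simp only [show (2:ℕ) - 1 = 1 from rfl, pow_one, Nat.cast_ofNat]; ring)
  have hd1 : deriv v = fun x => -(2 * c₀ / δ ^ 2) * (x - qbar) := funext fun x => (H1 x).deriv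
  have hd2 : ∀ q : ℝ, deriv (deriv v) q = -(2 * c₀ / δ ^ 2) := by
    intro q
    rw [hd1]
    exact (by simpa using ((hasDerivAt_id q).sub_const qbar).const_mul (-(2 * c₀ / δ ^ 2)) :
      HasDerivAt _ (-(2 * c₀ / δ ^ 2)) q).deriv
  have hδq : δ ≤ qbar := le_trans hδle (min_le_left _ _)
  have hδq' : δ ≤ 1 - qbar := le_trans hδle (min_le_right _ _)
  refine ⟨?_, ?_, ?_, ?_, hc₀pos⟩
  · intro q hq
    obtain ⟨hq1, hq2⟩ := hq
    have hq0 : 0 ≤ q := by linarith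
    have hq1' : q ≤ 1 := by linarith
    have hsq : (q - qbar) ^ 2 ≤ δ ^ 2 := by nlinarith
    have ht1 : (q - qbar) ^ 2 / δ ^ 2 ≤ 1 := div_le_one_of_le₀ hsq hδ2.le
    have ht0 : 0 ≤ (q - qbar) ^ 2 / δ ^ 2 := div_nonneg (sq_nonneg _) hδ2.le
    have hvq : v q = c₀ * (1 - (q - qbar) ^ 2 / δ ^ 2) := hv q
    have hvle : v q ≤ c₀ := by rw [hvq]; nlinarith
    have hvnn : 0 ≤ v q := by rw [hvq]; nlinarith
    refine ⟨?_, hvnn, hvle, hc₀le1⟩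
    rw [hd2 q, hvq]
    have hquart : q ^ 2 * (1 - q) ^ 2 ≤ 1 / 16 := by
      nlinarith [sq_nonneg (q - 1/2), mul_nonneg hq0 (by linarith : (0:ℝ) ≤ 1 - q),
        sq_nonneg (q * (1 - q) + 1/4)]
    have hcoef : (0:ℝ) ≤ ((h - l) / σ) ^ 2 * c₀ / δ ^ 2 := by positivity
    have hmain : ((h - l) / σ) ^ 2 * c₀ / δ ^ 2 * (q ^ 2 * (1 - q) ^ 2)
        ≤ ((h - l) / σ) ^ 2 * c₀ / δ ^ 2 * (1 / 16) := mul_le_mul_of_nonneg_left hquart hcoef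
    have htρ : 0 ≤ ρ * c₀ * ((q - qbar) ^ 2 / δ ^ 2) :=
      mul_nonneg (mul_nonneg hρ.le hc₀pos.le) ht0
    calc ρ * (c₀ * (1 - (q - qbar) ^ 2 / δ ^ 2))
          - 1 / 2 * ((h - l) / σ) ^ 2 * q ^ 2 * (1 - q) ^ 2 * -(2 * c₀ / δ ^ 2)
        = ρ * c₀ - ρ * c₀ * ((q - qbar) ^ 2 / δ ^ 2)
          + ((h - l) / σ) ^ 2 * c₀ / δ ^ 2 * (q ^ 2 * (1 - q) ^ 2) := by ring
      _ ≤ ρ * c₀ + ((h - l) / σ) ^ 2 * c₀ / δ ^ 2 * (1 / 16) := by linarith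
      _ = c₀ * (ρ + (1 / 16) * (((h - l) / σ) ^ 2 / δ ^ 2)) := by ring
      _ ≤ 1 := hcP
  · rw [hv, show qbar - δ - qbar = -δ by ring, neg_sq, div_self (ne_of_gt hδ2)]; ring
  · rw [hv, show qbar + δ - qbar = δ by ring, div_self (ne_of_gt hδ2)]; ring
  · rw [hv]; simp
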